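/- If G is an inverse semi-rational finite group whose order is divisible by 5, then the order of G is divisible by 4. -/
import Mathlib


/-- An element `x` of a group is inverse semi-rational if for every integer `j`
coprime to the order of `x`, `x ^ j` is conjugate to `x` or to `x⁻¹`. -/
def IsInvSemiRationalElem {G : Type*} [Group G] (x : G) : Prop :=
  ∀ j : ℤ, Int.gcd j (orderOf x) = 1 → IsConj (x ^ j) x ∨ IsConj (x ^ j) x⁻¹

/-- A group is inverse semi-rational if all its elements are. -/
def IsInvSemiRational (G : Type*) [Group G] : Prop :=
  ∀ x : G, IsInvSemiRationalElem x

private lemma conj_pow_aux {G : Type*} [Group G] (g x : G) (k : ℕ)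
    (hc : g * x * g⁻¹ = x ^ k) : ∀ n : ℕ, g ^ n * x * (g ^ n)⁻¹ = x ^ (k ^ n) := by
  intro n
  induction n with
  | zero => simp
  | succ n ih =>
    have : g ^ (n+1) * x * (g ^ (n+1))⁻¹ = g * (g ^ n * x * (g ^ n)⁻¹) * g⁻¹ := by
      group
    rw [this, ih]
    have : g * x ^ (k ^ n) * g⁻¹ = (g * x * g⁻¹) ^ (k ^ n) := by
      simp [conj_pow]
    rw [this, hc, ← pow_mul, pow_succ, mul_comm]

private lemma key {G : Type*} [Group G] [Finite G] (g x : G) (k : ℕ)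
    (hx : orderOf x = 5) (hk : orderOf (k : ZMod 5) = 4)
    (hc : g * x * g⁻¹ = x ^ k) : 4 ∣ Nat.card G := by
  set n := orderOf g with hn
  have hgn : g ^ n = 1 := pow_orderOf_eq_one g
  have h1 : x ^ (k ^ n) = x := by
    have := conj_pow_aux g x k hc n
    rw [hgn] at this; simpa using this.symm
  have h2 : k ^ n ≡ 1 [MOD 5] := by
    have := pow_eq_pow_iff_modEq.mp (by simpa using h1 : x ^ (k ^ n) = x ^ 1)
    simpa [hx] using this
  have h3 : ((k : ZMod 5)) ^ n = 1 := by
    have := (ZMod.natCast_eq_natCast_iff (k ^ n) 1 5).mpr h2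
    push_cast at this
    simpa using this
  have h4 : 4 ∣ n := hk ▸ orderOf_dvd_of_pow_eq_one h3
  exact h4.trans (orderOf_dvd_natCard g)

theorem stmt_7 {G : Type*} [Group G] [Finite G] (h : IsInvSemiRational G)
    (h5 : 5 ∣ Nat.card G) : 4 ∣ Nat.card G := by
  haveI : Fintype G := Fintype.ofFinite G
  haveI : Fact (Nat.Prime 5) := ⟨by norm_num⟩
  obtain ⟨x, hx⟩ := exists_prime_orderOf_dvd_card (G := G) 5 (by rwa [← Nat.card_eq_fintype_card])
  have hx5 : x ^ 5 = 1 := by rw [← hx]; exact pow_orderOf_eq_one x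
  have := h x 2 (by rw [hx]; decide)
  have hpow : x ^ (2:ℤ) = x ^ (2:ℕ) := by norm_cast
  rw [hpow] at this
  rcases this with hcj | hcj
  · obtain ⟨c, hc⟩ := isConj_iff.mp hcj
    -- c * x^2 * c⁻¹ = x, so (c x c⁻¹)^2 = x, hence c x c⁻¹ = x^3
    have hy : (c * x * c⁻¹) ^ 2 = x := by rw [conj_pow]; exact hc
    have hy5 : (c * x * c⁻¹) ^ 5 = 1 := by rw [conj_pow, hx5]; simp
    have hk : c * x * c⁻¹ = x ^ 3 := by
      have : (c * x * c⁻¹) ^ 6 = x ^ 3 := by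
        rw [show (6:ℕ) = 2 * 3 by norm_num, pow_mul, hy]
      rw [show (6:ℕ) = 5 + 1 by norm_num, pow_add, hy5, one_mul, pow_one] at this
      exact this
    exact key c x 3 hx (by rw [orderOf_eq_iff (by norm_num)]; decide) hk
  · obtain ⟨c, hc⟩ := isConj_iff.mp hcj
    have hy : (c * x * c⁻¹) ^ 2 = x⁻¹ := by rw [conj_pow]; exact hc
    have hy5 : (c * x * c⁻¹) ^ 5 = 1 := by rw [conj_pow, hx5]; simp
    have hxinv : x⁻¹ = x ^ 4 := by
      rw [eq_comm, eq_inv_iff_mul_eq_one, ← pow_succ]; exact hx5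
    have hk : c * x * c⁻¹ = x ^ 2 := by
      have : (c * x * c⁻¹) ^ 6 = x ^ 12 := by
        rw [show (6:ℕ) = 2 * 3 by norm_num, pow_mul, hy, hxinv, ← pow_mul]
      rw [show (6:ℕ) = 5 + 1 by norm_num, pow_add, hy5, one_mul, pow_one] at this
      rw [this, show (12:ℕ) = 5 + 5 + 2 by norm_num, pow_add, pow_add, hx5]; simp
    exact key c x 2 hx (by rw [orderOf_eq_iff (by norm_num)]; decide) hk
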